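/- Let g : ℝ → [0,∞) be locally integrable, g·φ a probability density with finite Laplace transform for all t, and suppose for all t ∈ ℝ: ∫_{−∞}^t e^{−(t−x)²/2} g(x) dx = (1/2) ∫_ℝ e^{−(t−x)²/2} g(x) dx, and additionally for almost every t: g(t) = (1/2)(∫_t^∞ x e^{−(t−x)²/2} g(x) dx − ∫_{−∞}^t x e^{−(t−x)²/2} g(x) dx). Then g satisfies g(t) = ∫_ℝ q(t−x) g(x) dx for almost every t, where q(y) = (1/2)|y|e^{−y²/2}. -/

import Mathlib

open MeasureTheory Real

theorem convolution_equation_of_identities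
    (g : ℝ → ℝ) (hg0 : ∀ x, 0 ≤ g x) (hloc : LocallyIntegrable g)
    (hprob : ∫ x : ℝ, g x * (exp (-x ^ 2 / 2) / Real.sqrt (2 * π)) = 1)
    (hint : ∀ t : ℝ,
      Integrable (fun x : ℝ => exp (t * x) * g x * (exp (-x ^ 2 / 2) / Real.sqrt (2 * π))))
    (h1 : ∀ t : ℝ,
      (∫ x in Set.Iic t, exp (-(t - x) ^ 2 / 2) * g x) =
        (1 / 2) * ∫ x : ℝ, exp (-(t - x) ^ 2 / 2) * g x)
    (h2 : ∀ᵐ t : ℝ,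
      g t = (1 / 2) * ((∫ x in Set.Ici t, x * exp (-(t - x) ^ 2 / 2) * g x) -
        ∫ x in Set.Iic t, x * exp (-(t - x) ^ 2 / 2) * g x)) :
    ∀ᵐ t : ℝ, g t = ∫ x : ℝ, (1 / 2) * |t - x| * exp (-(t - x) ^ 2 / 2) * g x := by
  have hsqrt : Real.sqrt (2 * π) ≠ 0 := by positivity
  filter_upwards [h2] with t ht
  set e : ℝ → ℝ := fun x => exp (-(t - x) ^ 2 / 2) with he
  have hexp : ∀ x : ℝ, e x = exp (t * x) * exp (-x ^ 2 / 2) * exp (-t ^ 2 / 2) := by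
    intro x
    rw [he]
    simp only
    rw [← Real.exp_add, ← Real.exp_add]
    congr 1
    ring
  -- Integrability of e * g
  have hφ : Integrable (fun x => e x * g x) := by
    have h := (hint t).const_mul (Real.sqrt (2 * π) * exp (-t ^ 2 / 2))
    refine h.congr (Filter.Eventually.of_forall fun x => ?_)
    show Real.sqrt (2 * π) * exp (-t ^ 2 / 2) *
        (exp (t * x) * g x * (exp (-x ^ 2 / 2) / Real.sqrt (2 * π))) = e x * g x
    rw [hexp x]
    field_simp
  -- Integrability of x * e x * g x
  have hx : Integrable (fun x => x * e x * g x) := by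
    have hb := (((hint (t + 1)).add (hint (t - 1))).const_mul
      (Real.sqrt (2 * π) * exp (-t ^ 2 / 2)))
    refine hb.mono ?_ (Filter.Eventually.of_forall fun x => ?_)
    · exact ((continuous_id.mul (by continuity : Continuous e)).aestronglyMeasurable.mul
        hloc.aestronglyMeasurable)
    · have hxb : |x| ≤ exp x + exp (-x) := by
        rcases le_total 0 x with hx0 | hx0
        · rw [abs_of_nonneg hx0]
          nlinarith [Real.add_one_le_exp x, Real.exp_pos (-x)]
        · rw [abs_of_nonpos hx0]
          nlinarith [Real.add_one_le_exp (-x), Real.exp_pos x]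
      have ea : exp ((t + 1) * x) = exp (t * x) * exp x := by
        rw [← Real.exp_add]; congr 1; ring
      have eb : exp ((t - 1) * x) = exp (t * x) * exp (-x) := by
        rw [← Real.exp_add]; congr 1; ring
      have hEpos : (0:ℝ) ≤ exp (t * x) * exp (-x ^ 2 / 2) * exp (-t ^ 2 / 2) := by positivity
      calc ‖x * e x * g x‖
          = |x| * (exp (t * x) * exp (-x ^ 2 / 2) * exp (-t ^ 2 / 2)) * g x := by
            rw [Real.norm_eq_abs, abs_mul, abs_mul, hexp x, abs_of_nonneg (hg0 x),
              abs_of_nonneg hEpos]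
        _ ≤ (exp x + exp (-x)) * (exp (t * x) * exp (-x ^ 2 / 2) * exp (-t ^ 2 / 2)) * g x := by
            have := hg0 x
            nlinarith [mul_le_mul_of_nonneg_right hxb hEpos]
        _ = ‖Real.sqrt (2 * π) * exp (-t ^ 2 / 2) *
              ((fun x => exp ((t + 1) * x) * g x * (exp (-x ^ 2 / 2) / Real.sqrt (2 * π))) x +
               (fun x => exp ((t - 1) * x) * g x * (exp (-x ^ 2 / 2) / Real.sqrt (2 * π))) x)‖ := by
            rw [Real.norm_eq_abs]
            simp only
            rw [abs_of_nonneg (mul_nonneg (by positivity)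
              (add_nonneg
                (mul_nonneg (mul_nonneg (Real.exp_pos _).le (hg0 x)) (by positivity))
                (mul_nonneg (mul_nonneg (Real.exp_pos _).le (hg0 x)) (by positivity)))), ea, eb]
            field_simp
        _ = ‖Real.sqrt (2 * π) * exp (-t ^ 2 / 2) *
              (((fun x => exp ((t + 1) * x) * g x * (exp (-x ^ 2 / 2) / Real.sqrt (2 * π))) +
               (fun x => exp ((t - 1) * x) * g x * (exp (-x ^ 2 / 2) / Real.sqrt (2 * π)))) x)‖ := by
            rw [Pi.add_apply]
  -- integrability of |t - x| * (e x * g x)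
  have htx : Integrable (fun x => (t - x) * (e x * g x)) := by
    have h' : (fun x => (t - x) * (e x * g x)) = fun x => t * (e x * g x) - x * e x * g x := by
      funext x; ring
    rw [h']
    exact (hφ.const_mul t).sub hx
  have habs : Integrable (fun x => |t - x| * (e x * g x)) := by
    refine htx.abs.congr (Filter.Eventually.of_forall fun x => ?_)
    simp only [abs_mul, abs_of_nonneg (mul_nonneg (Real.exp_pos _).le (hg0 x)), abs_of_nonneg (hg0 x),
      abs_of_nonneg (show 0 ≤ e x by rw [hexp x]; positivity)]
  -- split the integral
  have hIic : (∫ x in Set.Iic t, e x * g x) = (1 / 2) * ∫ x, e x * g x := h1 t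
  have hIoi : (∫ x in Set.Ioi t, e x * g x) = (1 / 2) * ∫ x, e x * g x := by
    have hsplit := intervalIntegral.integral_Iic_add_Ioi (b := t)
      hφ.integrableOn hφ.integrableOn
    rw [hIic] at hsplit
    linarith
  -- compute pieces
  have hIic_abs : (∫ x in Set.Iic t, |t - x| * (e x * g x)) =
      t * (∫ x in Set.Iic t, e x * g x) - ∫ x in Set.Iic t, x * e x * g x := by
    rw [← integral_const_mul, ← integral_sub ((hφ.const_mul t).integrableOn)
      (hx.integrableOn)]
    refine setIntegral_congr_fun measurableSet_Iic fun x hx' => ?_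
    rw [abs_of_nonneg (sub_nonneg.2 hx')]
    ring
  have hIoi_abs : (∫ x in Set.Ioi t, |t - x| * (e x * g x)) =
      (∫ x in Set.Ioi t, x * e x * g x) - t * ∫ x in Set.Ioi t, e x * g x := by
    rw [← integral_const_mul, ← integral_sub (hx.integrableOn)
      ((hφ.const_mul t).integrableOn)]
    refine setIntegral_congr_fun measurableSet_Ioi fun x hx' => ?_
    rw [abs_of_nonpos (sub_nonpos.2 (le_of_lt hx'))]
    ring
  have hIci : (∫ x in Set.Ici t, x * e x * g x) = ∫ x in Set.Ioi t, x * e x * g x :=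
    integral_Ici_eq_integral_Ioi
  have hsplit2 := intervalIntegral.integral_Iic_add_Ioi (b := t)
    habs.integrableOn habs.integrableOn
  calc g t = (1 / 2) * ((∫ x in Set.Ici t, x * e x * g x) -
        ∫ x in Set.Iic t, x * e x * g x) := ht
    _ = ∫ x : ℝ, (1 / 2) * |t - x| * e x * g x := by
        have h' : (∫ x : ℝ, (1 / 2) * |t - x| * e x * g x) =
            (1 / 2) * ∫ x : ℝ, |t - x| * (e x * g x) := by
          rw [← integral_const_mul]
          congr 1; funext x; ring
        rw [h', ← hsplit2, hIic_abs, hIoi_abs, hIci, hIic, hIoi]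
        ring
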